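/- Let φ(t) = c·exp(1/(|t|-1)) on [-1,1] with ∫φ = 1, and let 1 < D < C and 0 < ε with Cε < 1. Then φ([1-Cε,1]) ≥ φ(1-Dε)·(C-D)·ε, and consequently ln(φ([1-Cε,1])/φ([1-ε,1])) ≥ ln(C-D) + (D-1)/(D·ε). -/
import Mathlib


open MeasureTheory Real Set

/-- `φ(t) = c · exp(1/(|t|-1))` (with the convention `φ(±1) = 0`). -/
noncomputable def phi (c t : ℝ) : ℝ := if |t| = 1 then 0 else c * Real.exp (1 / (|t| - 1))


lemma phi_nonneg (c : ℝ) (hc : 0 ≤ c) (t : ℝ) : 0 ≤ phi c t := by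
  unfold phi; split
  · exact le_refl _
  · positivity

lemma phi_meas (c : ℝ) : Measurable (phi c) := by
  unfold phi
  apply Measurable.ite
  · exact measurableSet_eq_fun (by measurability) measurable_const
  · measurability
  · measurability

lemma phi_val (c x : ℝ) (h0 : 0 ≤ x) (h1 : x < 1) :
    phi c x = c * Real.exp (-(1 / (1 - x))) := by
  have habs : |x| = x := abs_of_nonneg h0
  unfold phi
  rw [habs, if_neg (by linarith)]
  congr 2
  rw [show x - 1 = -(1 - x) by ring, div_neg]

lemma phi_pos (c : ℝ) (hc : 0 < c) (x : ℝ) (h0 : 0 ≤ x) (h1 : x < 1) : 0 < phi c x := by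
  rw [phi_val c x h0 h1]; positivity

lemma phi_anti (c : ℝ) (hc : 0 ≤ c) {s t : ℝ} (hs : 0 ≤ s) (hst : s ≤ t) (ht : t ≤ 1) :
    phi c t ≤ phi c s := by
  rcases eq_or_lt_of_le ht with h1 | h1
  · subst h1
    have : phi c 1 = 0 := by unfold phi; rw [if_pos (by norm_num)]
    rw [this]; exact phi_nonneg c hc s
  · rw [phi_val c t (le_trans hs hst) h1, phi_val c s hs (lt_of_le_of_lt hst h1)]
    apply mul_le_mul_of_nonneg_left _ hc
    apply Real.exp_le_exp.2
    have h1s : 0 < 1 - t := by linarith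
    have h2s : 0 < 1 - s := by linarith
    rw [neg_le_neg_iff]
    apply one_div_le_one_div_of_le h1s (by linarith)


lemma phi_ii (c : ℝ) (hc : 0 ≤ c) {a b : ℝ} (ha : (0:ℝ) ≤ a) (hab : a ≤ b) (hb : b ≤ 1) :
    IntervalIntegrable (phi c) volume a b := by
  apply (intervalIntegrable_const (c := c)).mono_fun
    ((phi_meas c).aestronglyMeasurable.restrict)
  apply ae_restrict_of_forall_mem measurableSet_uIoc
  intro x hx
  rw [Set.uIoc_of_le hab] at hx
  have h0 : 0 ≤ x := le_trans ha (le_of_lt hx.1)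
  have h1 : x ≤ 1 := le_trans hx.2 hb
  show ‖phi c x‖ ≤ ‖c‖
  rw [Real.norm_eq_abs, Real.norm_eq_abs, abs_of_nonneg (phi_nonneg c hc x)]
  calc phi c x ≤ phi c 0 := phi_anti c hc le_rfl h0 h1
    _ ≤ c := by
        rw [phi_val c 0 le_rfl one_pos]
        calc c * Real.exp (-(1/(1-0))) ≤ c * 1 := by
              apply mul_le_mul_of_nonneg_left _ hc
              apply Real.exp_le_one_iff.2; norm_num
          _ = c := mul_one c
    _ ≤ |c| := le_abs_self c

lemma key_lower (c : ℝ) (hc : 0 < c) {a m : ℝ} (h0 : 0 ≤ a) (ham : a ≤ m) (hm1 : m ≤ 1) :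
    phi c m * (m - a) ≤ ∫ t in a..1, phi c t := by
  have hsplit : (∫ t in a..m, phi c t) + (∫ t in m..1, phi c t) = ∫ t in a..1, phi c t :=
    intervalIntegral.integral_add_adjacent_intervals
      (phi_ii c hc.le h0 ham hm1) (phi_ii c hc.le (le_trans h0 ham) hm1 le_rfl)
  have h1 : phi c m * (m - a) ≤ ∫ t in a..m, phi c t := by
    have := intervalIntegral.integral_mono_on (μ := volume) ham
      (intervalIntegrable_const (c := phi c m)) (phi_ii c hc.le h0 ham hm1)
      (fun x hx => phi_anti c hc.le (le_trans h0 hx.1) hx.2 hm1)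
    simpa [intervalIntegral.integral_const, smul_eq_mul, mul_comm] using this
  have h2 : 0 ≤ ∫ t in m..1, phi c t :=
    intervalIntegral.integral_nonneg hm1 (fun x _ => phi_nonneg c hc.le x)
  linarith

lemma key_upper (c : ℝ) (hc : 0 < c) {a : ℝ} (h0 : 0 ≤ a) (ha1 : a ≤ 1) :
    (∫ t in a..1, phi c t) ≤ phi c a * (1 - a) := by
  have := intervalIntegral.integral_mono_on (μ := volume) ha1
    (phi_ii c hc.le h0 ha1 le_rfl) (intervalIntegrable_const (c := phi c a))
    (fun x hx => phi_anti c hc.le h0 hx.1 hx.2)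
  simpa [intervalIntegral.integral_const, smul_eq_mul, mul_comm] using this

theorem stmt14 (c : ℝ) (hc : 0 < c)
    (hnorm : ∫ t in (-1:ℝ)..1, phi c t = 1)
    (C D ε : ℝ) (hD : 1 < D) (hDC : D < C) (hε : 0 < ε) (hCε : C * ε < 1) :
    (∫ t in (1 - C * ε)..1, phi c t) ≥ phi c (1 - D * ε) * (C - D) * ε ∧
    Real.log ((∫ t in (1 - C * ε)..1, phi c t) / (∫ t in (1 - ε)..1, phi c t)) ≥
      Real.log (C - D) + (D - 1) / (D * ε) := by
  have hDε : 0 < D * ε := by positivity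
  have hDCε : D * ε < C * ε := by nlinarith
  have hεDε : ε < D * ε := by nlinarith
  have hεlt1 : ε < 1 := by nlinarith
  have h0a : 0 ≤ 1 - C * ε := by linarith
  have hmlt1 : 1 - D * ε < 1 := by linarith
  have hpart1 : phi c (1 - D * ε) * (C - D) * ε ≤ ∫ t in (1 - C * ε)..1, phi c t := by
    have := key_lower c hc (a := 1 - C * ε) (m := 1 - D * ε) h0a (by linarith) (by linarith)
    calc phi c (1 - D * ε) * (C - D) * ε
        = phi c (1 - D * ε) * ((1 - D * ε) - (1 - C * ε)) := by ring
      _ ≤ _ := this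
  refine ⟨hpart1, ?_⟩
  -- positivity of numerator
  have hφm : phi c (1 - D * ε) = c * Real.exp (-(1 / (D * ε))) := by
    rw [phi_val c _ (by linarith) hmlt1]
    congr 2
    rw [show (1:ℝ) - (1 - D * ε) = D * ε by ring]
  have hφmpos : 0 < phi c (1 - D * ε) := by rw [hφm]; positivity
  have hICpos : 0 < ∫ t in (1 - C * ε)..1, phi c t :=
    lt_of_lt_of_le (mul_pos (mul_pos hφmpos (by linarith)) hε) hpart1
  -- positivity of denominator
  have hI1pos : 0 < ∫ t in (1 - ε)..1, phi c t := by
    have hk := key_lower c hc (a := 1 - ε) (m := 1 - ε/2) (by linarith) (by linarith) (by linarith)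
    have hφ2 : 0 < phi c (1 - ε/2) := phi_pos c hc _ (by linarith) (by linarith)
    have : (0:ℝ) < phi c (1 - ε/2) * ((1 - ε/2) - (1 - ε)) := by
      have : ((1:ℝ) - ε/2) - (1 - ε) = ε/2 := by ring
      rw [this]; positivity
    linarith
  -- upper bound on denominator
  have hφe : phi c (1 - ε) = c * Real.exp (-(1 / ε)) := by
    rw [phi_val c _ (by linarith) (by linarith)]
    congr 2
    rw [show (1:ℝ) - (1 - ε) = ε by ring]
  have hI1ub : (∫ t in (1 - ε)..1, phi c t) ≤ phi c (1 - ε) * ε := by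
    have := key_upper c hc (a := 1 - ε) (by linarith) (by linarith)
    calc (∫ t in (1 - ε)..1, phi c t) ≤ phi c (1 - ε) * (1 - (1 - ε)) := this
      _ = phi c (1 - ε) * ε := by ring
  -- log estimates
  rw [Real.log_div (ne_of_gt hICpos) (ne_of_gt hI1pos)]
  have hCD : (0:ℝ) < C - D := by linarith
  have hlogIC : Real.log (phi c (1 - D * ε) * (C - D) * ε) ≤
      Real.log (∫ t in (1 - C * ε)..1, phi c t) :=
    Real.log_le_log (mul_pos (mul_pos hφmpos hCD) hε) hpart1
  have hlogI1 : Real.log (∫ t in (1 - ε)..1, phi c t) ≤ Real.log (phi c (1 - ε) * ε) :=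
    Real.log_le_log hI1pos hI1ub
  have haux : (0:ℝ) < c * Real.exp (-(1 / (D * ε))) * (C - D) := mul_pos (by positivity) hCD
  have e1 : Real.log (phi c (1 - D * ε) * (C - D) * ε) =
      Real.log c + (-(1 / (D * ε))) + Real.log (C - D) + Real.log ε := by
    rw [hφm, Real.log_mul (ne_of_gt haux) (ne_of_gt hε),
      Real.log_mul (ne_of_gt (by positivity : (0:ℝ) < c * Real.exp (-(1 / (D * ε))))) (ne_of_gt hCD),
      Real.log_mul (ne_of_gt hc) (Real.exp_ne_zero _), Real.log_exp]
  have e2 : Real.log (phi c (1 - ε) * ε) = Real.log c + (-(1 / ε)) + Real.log ε := by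
    rw [hφe, Real.log_mul (ne_of_gt (by positivity : (0:ℝ) < c * Real.exp (-(1 / ε)))) (ne_of_gt hε),
      Real.log_mul (ne_of_gt hc) (Real.exp_ne_zero _), Real.log_exp]
  have harith : -(1 / (D * ε)) - (-(1 / ε)) = (D - 1) / (D * ε) := by
    field_simp
    ring
  rw [ge_iff_le]
  have := sub_le_sub hlogIC hlogI1  -- wrong direction pairing; fix with linarith
  linarith [hlogIC, hlogI1, e1, e2, harith.symm ▸ (le_refl ((D-1)/(D*ε)))]
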